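/- arXiv:hep-th/0010023 — 2 statements merged into one kernel-verified Lean document; each statement's English description precedes it below -/
import Mathlib

section
/- If ε : G × G → U(1) is defined by ε(g,h) = α(g,h)/α(h,g) for a 2-cocycle α on a finite abelian group G with values in U(1) (trivial action), then ε satisfies the discrete torsion conditions: ε(g₁g₂, g₃) = ε(g₁,g₃)ε(g₂,g₃), ε(g,h) = ε(h,g)⁻¹, and ε(g,g) = 1 for all g, h, g₁, g₂, g₃ ∈ G. -/
theorem stmt_8 {G : Type*} [CommGroup G] [Finite G] (α : G → G → ℂ)
    (habs : ∀ g h, ‖α g h‖ = 1)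
    (hcoc : ∀ x y z, α x y * α (x * y) z = α x (y * z) * α y z)
    (hnorm : ∀ x, α x 1 = 1 ∧ α 1 x = 1) :
    let ε : G → G → ℂ := fun g h => α g h / α h g
    (∀ g₁ g₂ g₃, ε (g₁ * g₂) g₃ = ε g₁ g₃ * ε g₂ g₃) ∧
    (∀ g h, ε g h = (ε h g)⁻¹) ∧ (∀ g, ε g g = 1) := by
  intro ε
  have h0 : ∀ g h, α g h ≠ 0 := by
    intro g h hz
    have := habs g h
    rw [hz] at this
    simp at this
  refine ⟨?_, ?_, ?_⟩
  · intro g₁ g₂ g₃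
    show α (g₁ * g₂) g₃ / α g₃ (g₁ * g₂) =
      (α g₁ g₃ / α g₃ g₁) * (α g₂ g₃ / α g₃ g₂)
    have h1 := hcoc g₁ g₂ g₃
    have h2 := hcoc g₁ g₃ g₂
    have h3 := hcoc g₃ g₁ g₂
    rw [mul_comm g₃ g₂] at h2
    rw [mul_comm g₃ g₁] at h3
    rw [div_mul_div_comm, div_eq_div_iff (h0 _ _) (mul_ne_zero (h0 _ _) (h0 _ _))]
    apply mul_left_cancel₀ (h0 g₁ g₂)
    apply mul_left_cancel₀ (h0 g₁ (g₂ * g₃))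
    linear_combination (α g₁ (g₂ * g₃) * α g₃ g₁ * α g₃ g₂) * h1 +
      (α g₁ (g₂ * g₃) * α g₁ g₃ * α g₂ g₃) * h3 -
      (α g₁ (g₂ * g₃) * α g₂ g₃ * α g₃ g₁) * h2
  · intro g h
    show α g h / α h g = (α h g / α g h)⁻¹
    rw [inv_div]
  · intro g
    exact div_self (h0 g g)
end

section
/- For the action of Z_3 = ⟨z⟩ on U = Z_n × Z_n given by z·(p,q) = (q−p, −p), the first cohomology group H¹(Z_3, U) is trivial when gcd(n,3) = 1 and is isomorphic to Z_3 when 3 divides n. -/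
theorem stmt_17 (n : ℕ) (hn : 0 < n) :
    let σ : ZMod n × ZMod n → ZMod n × ZMod n := fun u => (u.2 - u.1, -u.1)
    let act : ZMod 3 → ZMod n × ZMod n → ZMod n × ZMod n := fun g => σ^[g.val]
    (Nat.gcd n 3 = 1 → ∀ f : ZMod 3 → ZMod n × ZMod n,
        (∀ x y, f (x + y) = act x (f y) + f x) → ∃ u, ∀ x, f x = act x u - u) ∧
    (3 ∣ n → ∃ f : ZMod 3 → ZMod n × ZMod n,
        (∀ x y, f (x + y) = act x (f y) + f x) ∧
        (¬ ∃ u, ∀ x, f x = act x u - u) ∧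
        ∀ g : ZMod 3 → ZMod n × ZMod n, (∀ x y, g (x + y) = act x (g y) + g x) →
          ((∃ u, ∀ x, g x = act x u - u) ∨
           (∃ u, ∀ x, g x - f x = act x u - u) ∨
           (∃ u, ∀ x, g x + f x = act x u - u))) := by
  intro σ act
  have hσ : ∀ u : ZMod n × ZMod n, σ u = (u.2 - u.1, -u.1) := fun u => rfl
  have hact0 : ∀ u, act 0 u = u := fun u => rfl
  have hact1 : ∀ u, act 1 u = σ u := fun u => rfl
  have hact2 : ∀ u, act 2 u = σ (σ u) := fun u => rfl
  have hcases : ∀ x : ZMod 3, x = 0 ∨ x = 1 ∨ x = 2 := by decide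
  have hσsub : ∀ a b : ZMod n × ZMod n, σ (a - b) = σ a - σ b := by
    intro a b
    rw [hσ, hσ, hσ]
    refine Prod.ext ?_ ?_ <;> simp <;> try ring
  have hσadd : ∀ a b : ZMod n × ZMod n, σ (a + b) = σ a + σ b := by
    intro a b
    rw [hσ, hσ, hσ]
    refine Prod.ext ?_ ?_ <;> simp <;> try ring
  have hactsub : ∀ (x : ZMod 3) (a b), act x (a - b) = act x a - act x b := by
    intro x a b
    rcases hcases x with rfl | rfl | rfl
    · rw [hact0, hact0, hact0]
    · rw [hact1, hact1, hact1, hσsub]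
    · rw [hact2, hact2, hact2, hσsub, hσsub]
  have hactadd : ∀ (x : ZMod 3) (a b), act x (a + b) = act x a + act x b := by
    intro x a b
    rcases hcases x with rfl | rfl | rfl
    · rw [hact0, hact0, hact0]
    · rw [hact1, hact1, hact1, hσadd]
    · rw [hact2, hact2, hact2, hσadd, hσadd]
  -- key lemma: a cocycle h with h 1 = σ u - u is the coboundary of u
  have key : ∀ (h : ZMod 3 → ZMod n × ZMod n), (∀ x y, h (x + y) = act x (h y) + h x) →
      ∀ u, h 1 = σ u - u → ∀ x, h x = act x u - u := by
    intro h hh u hu x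
    have h0 : h 0 = 0 := by
      have := hh 0 0
      rw [hact0, show (0 + 0 : ZMod 3) = 0 from rfl] at this
      exact (left_eq_add.mp this)
    have h2 : h 2 = σ (h 1) + h 1 := by
      have := hh 1 1
      rwa [hact1, show (1 + 1 : ZMod 3) = 2 from rfl] at this
    rcases hcases x with rfl | rfl | rfl
    · rw [hact0, h0]; abel
    · rw [hact1, hu]
    · rw [hact2, h2, hu, hσsub]
      abel
  -- solving σ u - u = v when v.1 + v.2 = 3 * c
  have solve3 : ∀ (c : ZMod n) (v : ZMod n × ZMod n), v.1 + v.2 = 3 * c →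
      ∃ u, v = σ u - u := by
    intro c v hc
    refine ⟨(-c, c - v.2), ?_⟩
    rw [hσ]
    refine Prod.ext ?_ ?_ <;> simp
    linear_combination hc
  constructor
  · -- coprime case
    intro hgcd f hf
    have hco : Nat.Coprime 3 n := Nat.coprime_comm.mp hgcd
    set c : ZMod n := (((ZMod.unitOfCoprime 3 hco)⁻¹ : (ZMod n)ˣ) : ZMod n) with hcdef
    have h3c : (3 : ZMod n) * c = 1 := by
      have h := (ZMod.unitOfCoprime 3 hco).mul_inv
      rw [ZMod.coe_unitOfCoprime] at h
      push_cast at h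
      exact h
    obtain ⟨u, hu⟩ := solve3 (c * ((f 1).1 + (f 1).2)) (f 1) (by
      rw [show (3 : ZMod n) * (c * ((f 1).1 + (f 1).2))
          = (3 * c) * ((f 1).1 + (f 1).2) by ring, h3c, one_mul])
    exact ⟨u, key f hf u hu⟩
  · -- 3 ∣ n case
    intro hdvd
    have hnz : NeZero n := ⟨hn.ne'⟩
    set φ : ZMod n →+* ZMod 3 := ZMod.castHom hdvd (ZMod 3) with hφdef
    have hφ3 : ∀ a : ZMod n, φ (3 * a) = 0 := by
      intro a
      rw [map_mul]
      have h3 : φ (3 : ZMod n) = 0 := by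
        have : ((3 : ℕ) : ZMod n) = (3 : ZMod n) := by push_cast; ring
        rw [← this, map_natCast]
        decide
      rw [h3, zero_mul]
    -- if φ of the coordinate sum vanishes we can solve σ u - u = v
    have solve : ∀ v : ZMod n × ZMod n, φ (v.1 + v.2) = 0 → ∃ u, v = σ u - u := by
      intro v hv
      have hval : ((v.1 + v.2).val : ZMod 3) = 0 := by
        rwa [hφdef, ZMod.castHom_apply, ZMod.cast_eq_val] at hv
      obtain ⟨k, hk⟩ := (ZMod.natCast_eq_zero_iff _ 3).mp hval
      refine solve3 (k : ZMod n) v ?_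
      have hback : ((v.1 + v.2).val : ZMod n) = v.1 + v.2 := by
        rw [ZMod.natCast_val, ZMod.cast_id]
      rw [← hback, hk]
      push_cast; ring
    -- the cocycle F
    set F : ZMod 3 → ZMod n × ZMod n :=
      fun x => if x = 0 then 0 else if x = 1 then (1, 0) else (0, -1) with hFdef
    have hF0 : F 0 = 0 := by simp [hFdef]
    have hF1 : F 1 = (1, 0) := by
      simp [hFdef, (by decide : (1 : ZMod 3) ≠ 0)]
    have hF2 : F 2 = (0, -1) := by
      simp [hFdef, (by decide : (2 : ZMod 3) ≠ 0), (by decide : (2 : ZMod 3) ≠ 1)]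
    have hFco : ∀ x y, F (x + y) = act x (F y) + F x := by
      intro x y
      rcases hcases x with rfl | rfl | rfl <;> rcases hcases y with rfl | rfl | rfl <;>
        simp only [show (0+0 : ZMod 3) = 0 from rfl, show (0+1 : ZMod 3) = 1 from rfl,
          show (0+2 : ZMod 3) = 2 from rfl, show (1+0 : ZMod 3) = 1 from rfl,
          show (1+1 : ZMod 3) = 2 from rfl, show (1+2 : ZMod 3) = 0 from rfl,
          show (2+0 : ZMod 3) = 2 from rfl, show (2+1 : ZMod 3) = 0 from rfl,
          show (2+2 : ZMod 3) = 1 from rfl,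
          hact0, hact1, hact2, hF0, hF1, hF2, hσ] <;>
        refine Prod.ext ?_ ?_ <;> simp
    refine ⟨F, hFco, ?_, ?_⟩
    · rintro ⟨u, hu⟩
      have h1 := hu 1
      rw [hact1, hσ, hF1] at h1
      have ha : (1 : ZMod n) = u.2 - u.1 - u.1 := congrArg Prod.fst h1
      have hb : (0 : ZMod n) = -u.1 - u.2 := congrArg Prod.snd h1
      have hsum : (1 : ZMod n) = 3 * (-u.1) := by linear_combination ha + hb
      have := congrArg φ hsum
      rw [hφ3, map_one] at this
      exact one_ne_zero this
    · intro g hg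
      have htri : φ ((g 1).1 + (g 1).2) = 0 ∨ φ ((g 1).1 + (g 1).2) = 1 ∨
          φ ((g 1).1 + (g 1).2) = 2 := by
        rcases hcases (φ ((g 1).1 + (g 1).2)) with h | h | h <;> tauto
      rcases htri with h | h | h
      · left
        obtain ⟨u, hu⟩ := solve (g 1) h
        exact ⟨u, key g hg u hu⟩
      · right; left
        have hdco : ∀ x y, (g (x+y) - F (x+y)) = act x (g y - F y) + (g x - F x) := by
          intro x y
          rw [hg, hFco, hactsub]
          abel
        have hφd : φ ((g 1 - F 1).1 + (g 1 - F 1).2) = 0 := by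
          rw [hF1]
          simp only [Prod.fst_sub, Prod.snd_sub]
          rw [show (g 1).1 - ((1 : ZMod n), (0 : ZMod n)).1 + ((g 1).2 - (1, 0).2)
              = ((g 1).1 + (g 1).2) - 1 by push_cast; ring]
          rw [map_sub, h, map_one, sub_self]
        obtain ⟨u, hu⟩ := solve (g 1 - F 1) hφd
        exact ⟨u, key (fun x => g x - F x) hdco u hu⟩
      · right; right
        have hdco : ∀ x y, (g (x+y) + F (x+y)) = act x (g y + F y) + (g x + F x) := by
          intro x y
          rw [hg, hFco, hactadd]
          abel
        have hφd : φ ((g 1 + F 1).1 + (g 1 + F 1).2) = 0 := by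
          rw [hF1]
          simp only [Prod.fst_add, Prod.snd_add]
          rw [show (g 1).1 + ((1 : ZMod n), (0 : ZMod n)).1 + ((g 1).2 + (1, 0).2)
              = ((g 1).1 + (g 1).2) + 1 by push_cast; ring]
          rw [map_add, h, map_one]
          decide
        obtain ⟨u, hu⟩ := solve (g 1 + F 1) hφd
        exact ⟨u, key (fun x => g x + F x) hdco u hu⟩
end
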